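/- Let G = (A, (Γ, γ, φ)) be a Manna-Pnueli game over arena A = (V, E) such that every event of Γ occurs in at most one atom of φ. Let Γ_F and Γ_G be the sets of events occurring in F-atoms, respectively G-atoms, of φ (the local events), and let Γ_EL be the set of events occurring in GF- or FG-atoms of φ. Define the transformed arena A' with node set V × 2^{Γ_F ∪ Γ_G}, edges from (v, L) to (v', upd(v, L)) for every edge (v, v') of A, where upd(v, L) = ((L ∩ γ(v)) ∩ Γ_G) ∪ ((L ∪ γ(v)) ∩ Γ_F), and with (v, L) owned by the owner of v. Define the labeling γ'(v, L) = (γ(v) ∩ Γ_EL) ∪ L and let φ_1 be the Emerson-Lei formula obtained from φ by replacing every atom of shape F a or G a by GF a. Then for every node v ∈ V, the system player wins v in the MP game G if and only if the system player wins (v, Γ_G) in the EL game G_1 = (A', (Γ, γ', φ_1)). -/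

import Mathlib

/-- A game arena: a directed graph whose nodes are partitioned into system
nodes (`sys v` holds) and environment nodes, and in which every node has at
least one successor. -/
structure Arena (V : Type) where
  E : V → V → Prop
  sys : V → Prop
  succ_nonempty : ∀ v, ∃ w, E v w

/-- A play is an infinite path in the arena. -/
def Arena.IsPlay {V : Type} (A : Arena V) (π : ℕ → V) : Prop :=
  ∀ n, A.E (π n) (π (n + 1))

/-- A strategy assigns to every history `h = v₀...v_{n-1}` and current node
`v_n` a next node. -/
def Strategy (V : Type) : Type := List V → V → V

/-- A system strategy is valid if it always chooses successors at system
nodes. -/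
def Arena.ValidSysStrat {V : Type} (A : Arena V) (σ : Strategy V) : Prop :=
  ∀ (h : List V) (v : V), A.sys v → A.E v (σ h v)

/-- An environment strategy is valid if it always chooses successors at
environment nodes. -/
def Arena.ValidEnvStrat {V : Type} (A : Arena V) (σ : Strategy V) : Prop :=
  ∀ (h : List V) (v : V), ¬ A.sys v → A.E v (σ h v)

/-- A play `π` is compatible with a system strategy `σ` if at every system
node the play follows `σ`. -/
def Arena.SysCompatible {V : Type} (A : Arena V) (σ : Strategy V)
    (π : ℕ → V) : Prop :=
  ∀ n, A.sys (π n) → π (n + 1) = σ ((List.range n).map π) (π n)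

/-- A play `π` is compatible with an environment strategy `σ` if at every
environment node the play follows `σ`. -/
def Arena.EnvCompatible {V : Type} (A : Arena V) (σ : Strategy V)
    (π : ℕ → V) : Prop :=
  ∀ n, ¬ A.sys (π n) → π (n + 1) = σ ((List.range n).map π) (π n)

/-- The system player wins node `v` for the objective `O` if it has a valid
strategy such that all compatible plays starting at `v` are in `O`. -/
def Arena.SysWins {V : Type} (A : Arena V) (O : (ℕ → V) → Prop) (v : V) :
    Prop :=
  ∃ σ : Strategy V, A.ValidSysStrat σ ∧
    ∀ π : ℕ → V, A.IsPlay π → π 0 = v → A.SysCompatible σ π → O π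

/-- The environment player wins node `v` for the objective `O` if it has a
valid strategy such that all compatible plays starting at `v` are not in
`O`. -/
def Arena.EnvWins {V : Type} (A : Arena V) (O : (ℕ → V) → Prop) (v : V) :
    Prop :=
  ∃ σ : Strategy V, A.ValidEnvStrat σ ∧
    ∀ π : ℕ → V, A.IsPlay π → π 0 = v → A.EnvCompatible σ π → ¬ O π

/-- Manna-Pnueli formulas over a set `Γ` of events: positive Boolean formulas
over atoms `GF a`, `FG a`, `F a`, `G a`. -/
inductive MPForm (Γ : Type) where
  | tt : MPForm Γ
  | ff : MPForm Γ
  | gf : Γ → MPForm Γ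
  | fg : Γ → MPForm Γ
  | fa : Γ → MPForm Γ
  | ga : Γ → MPForm Γ
  | and : MPForm Γ → MPForm Γ → MPForm Γ
  | or : MPForm Γ → MPForm Γ → MPForm Γ

/-- Satisfaction of a Manna-Pnueli formula on an infinite sequence of sets of
events. -/
def MPForm.sat {Γ : Type} (π : ℕ → Finset Γ) : MPForm Γ → Prop
  | .tt => True
  | .ff => False
  | .gf a => ∀ i, ∃ j > i, a ∈ π j
  | .fg a => ∃ i, ∀ j > i, a ∈ π j
  | .fa a => ∃ i, a ∈ π i
  | .ga a => ∀ i, a ∈ π i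
  | .and φ ψ => φ.sat π ∧ ψ.sat π
  | .or φ ψ => φ.sat π ∨ ψ.sat π

/-- The events occurring in `F`-atoms of a Manna-Pnueli formula. -/
def MPForm.fEvents {Γ : Type} [DecidableEq Γ] : MPForm Γ → Finset Γ
  | .fa a => {a}
  | .and φ ψ => φ.fEvents ∪ ψ.fEvents
  | .or φ ψ => φ.fEvents ∪ ψ.fEvents
  | _ => ∅

/-- The events occurring in `G`-atoms of a Manna-Pnueli formula. -/
def MPForm.gEvents {Γ : Type} [DecidableEq Γ] : MPForm Γ → Finset Γ
  | .ga a => {a}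
  | .and φ ψ => φ.gEvents ∪ ψ.gEvents
  | .or φ ψ => φ.gEvents ∪ ψ.gEvents
  | _ => ∅

/-- The events occurring in `GF`-atoms of a Manna-Pnueli formula. -/
def MPForm.gfEvents {Γ : Type} [DecidableEq Γ] : MPForm Γ → Finset Γ
  | .gf a => {a}
  | .and φ ψ => φ.gfEvents ∪ ψ.gfEvents
  | .or φ ψ => φ.gfEvents ∪ ψ.gfEvents
  | _ => ∅

/-- The events occurring in `FG`-atoms of a Manna-Pnueli formula. -/
def MPForm.fgEvents {Γ : Type} [DecidableEq Γ] : MPForm Γ → Finset Γ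
  | .fg a => {a}
  | .and φ ψ => φ.fgEvents ∪ ψ.fgEvents
  | .or φ ψ => φ.fgEvents ∪ ψ.fgEvents
  | _ => ∅

/-- The number of atoms of a Manna-Pnueli formula in which the event `a`
occurs. -/
def MPForm.atomCount {Γ : Type} [DecidableEq Γ] (a : Γ) : MPForm Γ → ℕ
  | .gf b => if b = a then 1 else 0
  | .fg b => if b = a then 1 else 0
  | .fa b => if b = a then 1 else 0
  | .ga b => if b = a then 1 else 0
  | .and φ ψ => φ.atomCount a + ψ.atomCount a
  | .or φ ψ => φ.atomCount a + ψ.atomCount a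
  | _ => 0

/-- The memory update function: remove from the memory `L` all `ΓG`-events
that do not occur in the label of the current node `v` and add all
`ΓF`-events that occur in the label of `v`. -/
def upd {V Γ : Type} [DecidableEq Γ] (γ : V → Finset Γ) (ΓF ΓG : Finset Γ)
    (v : V) (L : Finset Γ) : Finset Γ :=
  ((L ∩ γ v) ∩ ΓG) ∪ ((L ∪ γ v) ∩ ΓF)

/-- The transformed arena `A'` over `V × 2^Γ`, with edges from `(v, L)` to
`(v', upd(v, L))` for every edge `(v, v')` of `A`, and with `(v, L)` owned by
the owner of `v`. -/
def Arena.withMemory {V Γ : Type} [DecidableEq Γ] (A : Arena V)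
    (γ : V → Finset Γ) (ΓF ΓG : Finset Γ) : Arena (V × Finset Γ) where
  E p q := A.E p.1 q.1 ∧ q.2 = upd γ ΓF ΓG p.1 p.2
  sys p := A.sys p.1
  succ_nonempty p := by
    obtain ⟨w, hw⟩ := A.succ_nonempty p.1
    exact ⟨(w, upd γ ΓF ΓG p.1 p.2), hw, rfl⟩

/-- The Emerson-Lei formula `φ₁` obtained from a Manna-Pnueli formula `φ` by
replacing every atom of shape `F a` or `G a` by `GF a`. -/
def MPForm.toEL {Γ : Type} : MPForm Γ → MPForm Γ
  | .fa a => .gf a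
  | .ga a => .gf a
  | .and φ ψ => .and φ.toEL ψ.toEL
  | .or φ ψ => .or φ.toEL ψ.toEL
  | φ => φ

section Aux

variable {V Γ : Type} [DecidableEq Γ]

lemma mem_upd (γ : V → Finset Γ) (ΓF ΓG : Finset Γ) (v : V) (L : Finset Γ) (a : Γ) :
    a ∈ upd γ ΓF ΓG v L ↔
      (a ∈ L ∧ a ∈ γ v ∧ a ∈ ΓG) ∨ ((a ∈ L ∨ a ∈ γ v) ∧ a ∈ ΓF) := by
  simp [upd, Finset.mem_union, Finset.mem_inter, and_assoc]

/-- The memory sequence along a play. -/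
def memSeq (γ : V → Finset Γ) (ΓF ΓG : Finset Γ) (π : ℕ → V) : ℕ → Finset Γ
  | 0 => ΓG
  | n + 1 => upd γ ΓF ΓG (π n) (memSeq γ ΓF ΓG π n)

lemma memSeq_f (γ : V → Finset Γ) (ΓF ΓG : Finset Γ) (π : ℕ → V) (a : Γ)
    (haF : a ∈ ΓF) (haG : a ∉ ΓG) (n : ℕ) :
    a ∈ memSeq γ ΓF ΓG π n ↔ ∃ i < n, a ∈ γ (π i) := by
  induction n with
  | zero => simp [memSeq, haG]
  | succ n ih =>
    rw [memSeq, mem_upd, ih]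
    constructor
    · rintro (⟨_, _, h⟩ | ⟨h | h, _⟩)
      · exact absurd h haG
      · obtain ⟨i, hi, h⟩ := h; exact ⟨i, by omega, h⟩
      · exact ⟨n, by omega, h⟩
    · rintro ⟨i, hi, h⟩
      rcases Nat.lt_succ_iff_lt_or_eq.mp hi with hi | rfl
      · exact Or.inr ⟨Or.inl ⟨i, hi, h⟩, haF⟩
      · exact Or.inr ⟨Or.inr h, haF⟩

lemma memSeq_g (γ : V → Finset Γ) (ΓF ΓG : Finset Γ) (π : ℕ → V) (a : Γ)
    (haG : a ∈ ΓG) (haF : a ∉ ΓF) (n : ℕ) :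
    a ∈ memSeq γ ΓF ΓG π n ↔ ∀ i < n, a ∈ γ (π i) := by
  induction n with
  | zero => simp [memSeq, haG]
  | succ n ih =>
    rw [memSeq, mem_upd, ih]
    constructor
    · rintro (⟨h1, h2, _⟩ | ⟨_, h⟩)
      · intro i hi
        rcases Nat.lt_succ_iff_lt_or_eq.mp hi with hi | rfl
        · exact h1 i hi
        · exact h2
      · exact absurd h haF
    · intro h
      exact Or.inl ⟨fun i hi => h i (by omega), h n (by omega), haG⟩

lemma memSeq_not (γ : V → Finset Γ) (ΓF ΓG : Finset Γ) (π : ℕ → V) (a : Γ)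
    (haF : a ∉ ΓF) (haG : a ∉ ΓG) (n : ℕ) :
    a ∉ memSeq γ ΓF ΓG π n := by
  induction n with
  | zero => exact haG
  | succ n ih =>
    rw [memSeq, mem_upd]
    rintro (⟨_, _, h⟩ | ⟨_, h⟩)
    · exact haG h
    · exact haF h

lemma indic_le (a : Γ) (φ : MPForm Γ) :
    ((if a ∈ φ.fEvents then 1 else 0) + (if a ∈ φ.gEvents then 1 else 0) +
      (if a ∈ φ.gfEvents then 1 else 0) + (if a ∈ φ.fgEvents then 1 else 0) : ℕ)
      ≤ φ.atomCount a := by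
  have key : ∀ (X Y : Finset Γ),
      ((if a ∈ X ∪ Y then 1 else 0) : ℕ) ≤ (if a ∈ X then 1 else 0) + (if a ∈ Y then 1 else 0) := by
    intro X Y
    by_cases hX : a ∈ X <;> by_cases hY : a ∈ Y <;>
      simp [Finset.mem_union, hX, hY]
  induction φ with
  | tt => simp [MPForm.fEvents, MPForm.gEvents, MPForm.gfEvents, MPForm.fgEvents, MPForm.atomCount]
  | ff => simp [MPForm.fEvents, MPForm.gEvents, MPForm.gfEvents, MPForm.fgEvents, MPForm.atomCount]
  | gf b =>
    simp only [MPForm.fEvents, MPForm.gEvents, MPForm.gfEvents, MPForm.fgEvents,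
      MPForm.atomCount, Finset.notMem_empty, if_false, Finset.mem_singleton]
    split_ifs with h1 h2 <;> first | omega | exact absurd h1.symm h2
  | fg b =>
    simp only [MPForm.fEvents, MPForm.gEvents, MPForm.gfEvents, MPForm.fgEvents,
      MPForm.atomCount, Finset.notMem_empty, if_false, Finset.mem_singleton]
    split_ifs with h1 h2 <;> first | omega | exact absurd h1.symm h2
  | fa b =>
    simp only [MPForm.fEvents, MPForm.gEvents, MPForm.gfEvents, MPForm.fgEvents,
      MPForm.atomCount, Finset.notMem_empty, if_false, Finset.mem_singleton]
    split_ifs with h1 h2 <;> first | omega | exact absurd h1.symm h2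
  | ga b =>
    simp only [MPForm.fEvents, MPForm.gEvents, MPForm.gfEvents, MPForm.fgEvents,
      MPForm.atomCount, Finset.notMem_empty, if_false, Finset.mem_singleton]
    split_ifs with h1 h2 <;> first | omega | exact absurd h1.symm h2
  | and ψ χ ih1 ih2 =>
    simp only [MPForm.fEvents, MPForm.gEvents, MPForm.gfEvents, MPForm.fgEvents,
      MPForm.atomCount]
    have k1 := key ψ.fEvents χ.fEvents
    have k2 := key ψ.gEvents χ.gEvents
    have k3 := key ψ.gfEvents χ.gfEvents
    have k4 := key ψ.fgEvents χ.fgEvents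
    simp only [Finset.mem_union] at k1 k2 k3 k4 ⊢
    linarith
  | or ψ χ ih1 ih2 =>
    simp only [MPForm.fEvents, MPForm.gEvents, MPForm.gfEvents, MPForm.fgEvents,
      MPForm.atomCount]
    have k1 := key ψ.fEvents χ.fEvents
    have k2 := key ψ.gEvents χ.gEvents
    have k3 := key ψ.gfEvents χ.gfEvents
    have k4 := key ψ.fgEvents χ.fgEvents
    simp only [Finset.mem_union] at k1 k2 k3 k4 ⊢
    linarith

/-- Objective equivalence along a play with its memory sequence. -/
lemma sat_equiv (γ : V → Finset Γ) (ΓF ΓG ΓEL : Finset Γ) (π : ℕ → V)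
    (ψ : MPForm Γ)
    (hF : ∀ a ∈ ψ.fEvents, a ∈ ΓF ∧ a ∉ ΓG ∧ a ∉ ΓEL)
    (hG : ∀ a ∈ ψ.gEvents, a ∈ ΓG ∧ a ∉ ΓF ∧ a ∉ ΓEL)
    (hGF : ∀ a ∈ ψ.gfEvents, a ∈ ΓEL ∧ a ∉ ΓF ∧ a ∉ ΓG)
    (hFG : ∀ a ∈ ψ.fgEvents, a ∈ ΓEL ∧ a ∉ ΓF ∧ a ∉ ΓG) :
    ψ.toEL.sat (fun n => (γ (π n) ∩ ΓEL) ∪ memSeq γ ΓF ΓG π n) ↔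
      ψ.sat (fun n => γ (π n)) := by
  induction ψ with
  | tt => simp [MPForm.toEL, MPForm.sat]
  | ff => simp [MPForm.toEL, MPForm.sat]
  | gf a =>
    obtain ⟨hEL, hf, hg⟩ := hGF a (by simp [MPForm.gfEvents])
    have key : ∀ j, a ∈ (γ (π j) ∩ ΓEL) ∪ memSeq γ ΓF ΓG π j ↔ a ∈ γ (π j) := by
      intro j
      simp [Finset.mem_union, Finset.mem_inter, hEL, memSeq_not γ ΓF ΓG π a hf hg j]
    simp only [MPForm.toEL, MPForm.sat, key]
  | fg a =>
    obtain ⟨hEL, hf, hg⟩ := hFG a (by simp [MPForm.fgEvents])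
    have key : ∀ j, a ∈ (γ (π j) ∩ ΓEL) ∪ memSeq γ ΓF ΓG π j ↔ a ∈ γ (π j) := by
      intro j
      simp [Finset.mem_union, Finset.mem_inter, hEL, memSeq_not γ ΓF ΓG π a hf hg j]
    simp only [MPForm.toEL, MPForm.sat, key]
  | fa a =>
    obtain ⟨hf, hg, hEL⟩ := hF a (by simp [MPForm.fEvents])
    have key : ∀ j, a ∈ (γ (π j) ∩ ΓEL) ∪ memSeq γ ΓF ΓG π j ↔ ∃ i < j, a ∈ γ (π i) := by
      intro j
      simp [Finset.mem_union, Finset.mem_inter, hEL, memSeq_f γ ΓF ΓG π a hf hg j]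
    simp only [MPForm.toEL, MPForm.sat, key]
    constructor
    · intro h
      obtain ⟨j, _, i, _, hi⟩ := h 0
      exact ⟨i, hi⟩
    · rintro ⟨i, hi⟩ k
      exact ⟨k + i + 1, by omega, i, by omega, hi⟩
  | ga a =>
    obtain ⟨hg, hf, hEL⟩ := hG a (by simp [MPForm.gEvents])
    have key : ∀ j, a ∈ (γ (π j) ∩ ΓEL) ∪ memSeq γ ΓF ΓG π j ↔ ∀ i < j, a ∈ γ (π i) := by
      intro j
      simp [Finset.mem_union, Finset.mem_inter, hEL, memSeq_g γ ΓF ΓG π a hg hf j]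
    simp only [MPForm.toEL, MPForm.sat, key]
    constructor
    · intro h i
      obtain ⟨j, hj, hall⟩ := h i
      exact hall i hj
    · intro h i
      exact ⟨i + 1, by omega, fun k _ => h k⟩
  | and ψ χ ih1 ih2 =>
    have e1 := ih1 (fun a ha => hF a (Finset.mem_union_left _ ha))
      (fun a ha => hG a (Finset.mem_union_left _ ha))
      (fun a ha => hGF a (Finset.mem_union_left _ ha))
      (fun a ha => hFG a (Finset.mem_union_left _ ha))
    have e2 := ih2 (fun a ha => hF a (Finset.mem_union_right _ ha))
      (fun a ha => hG a (Finset.mem_union_right _ ha))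
      (fun a ha => hGF a (Finset.mem_union_right _ ha))
      (fun a ha => hFG a (Finset.mem_union_right _ ha))
    simp only [MPForm.toEL, MPForm.sat, e1, e2]
  | or ψ χ ih1 ih2 =>
    have e1 := ih1 (fun a ha => hF a (Finset.mem_union_left _ ha))
      (fun a ha => hG a (Finset.mem_union_left _ ha))
      (fun a ha => hGF a (Finset.mem_union_left _ ha))
      (fun a ha => hFG a (Finset.mem_union_left _ ha))
    have e2 := ih2 (fun a ha => hF a (Finset.mem_union_right _ ha))
      (fun a ha => hG a (Finset.mem_union_right _ ha))
      (fun a ha => hGF a (Finset.mem_union_right _ ha))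
      (fun a ha => hFG a (Finset.mem_union_right _ ha))
    simp only [MPForm.toEL, MPForm.sat, e1, e2]

/-- Pair every node of a history with the memory accumulated before it. -/
def pairHist (γ : V → Finset Γ) (ΓF ΓG : Finset Γ) :
    List V → Finset Γ → List (V × Finset Γ)
  | [], _ => []
  | w :: t, L => (w, L) :: pairHist γ ΓF ΓG t (upd γ ΓF ΓG w L)

/-- Fold the memory update along a history. -/
def memFold (γ : V → Finset Γ) (ΓF ΓG : Finset Γ) (l : List V) (L : Finset Γ) : Finset Γ :=
  l.foldl (fun L w => upd γ ΓF ΓG w L) L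

lemma memFold_append (γ : V → Finset Γ) (ΓF ΓG : Finset Γ) (l : List V) (w : V) (L : Finset Γ) :
    memFold γ ΓF ΓG (l ++ [w]) L = upd γ ΓF ΓG w (memFold γ ΓF ΓG l L) := by
  simp [memFold, List.foldl_append]

lemma pairHist_append (γ : V → Finset Γ) (ΓF ΓG : Finset Γ) (l : List V) (w : V) (L : Finset Γ) :
    pairHist γ ΓF ΓG (l ++ [w]) L = pairHist γ ΓF ΓG l L ++ [(w, memFold γ ΓF ΓG l L)] := by
  induction l generalizing L with
  | nil => simp [pairHist, memFold]
  | cons x t ih => simp [pairHist, memFold, ih, List.foldl_cons]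

end Aux

/-- reduction of Manna-Pnueli games to Emerson-Lei games via an
arena transformation with memory for local events. The system player wins `v`
in the MP game `G = (A, (Γ, γ, φ))` iff it wins `(v, Γ_G)` in the EL game
`G₁ = (A', (Γ, γ', φ₁))`. -/
theorem mp_game_iff_el_game
    {V Γ : Type} [Fintype V] [Fintype Γ] [DecidableEq Γ]
    (A : Arena V) (γ : V → Finset Γ) (φ : MPForm Γ)
    (hunique : ∀ a : Γ, φ.atomCount a ≤ 1)
    (v : V) :
    A.SysWins (fun π => φ.sat (fun n => γ (π n))) v ↔
    (A.withMemory γ φ.fEvents φ.gEvents).SysWins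
      (fun π' => φ.toEL.sat
        (fun n => ((γ (π' n).1 ∩ (φ.gfEvents ∪ φ.fgEvents)) ∪ (π' n).2)))
      (v, φ.gEvents) := by
  set ΓF := φ.fEvents with hΓF
  set ΓG := φ.gEvents with hΓG
  set ΓEL := φ.gfEvents ∪ φ.fgEvents with hΓEL
  -- disjointness of event classes, from `hunique`
  have key : ∀ a : Γ,
      ((if a ∈ φ.fEvents then 1 else 0) + (if a ∈ φ.gEvents then 1 else 0) +
        (if a ∈ φ.gfEvents then 1 else 0) + (if a ∈ φ.fgEvents then 1 else 0) : ℕ) ≤ 1 :=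
    fun a => (indic_le a φ).trans (hunique a)
  have hF : ∀ a ∈ φ.fEvents, a ∈ ΓF ∧ a ∉ ΓG ∧ a ∉ ΓEL := by
    intro a ha
    have h := key a
    rw [if_pos ha] at h
    refine ⟨ha, ?_, ?_⟩
    · intro hb; rw [if_pos hb] at h; split_ifs at h <;> omega
    · intro hb
      rcases Finset.mem_union.mp hb with hb | hb <;>
        [rw [if_pos hb] at h; rw [if_pos hb] at h] <;> split_ifs at h <;> omega
  have hG : ∀ a ∈ φ.gEvents, a ∈ ΓG ∧ a ∉ ΓF ∧ a ∉ ΓEL := by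
    intro a ha
    have h := key a
    rw [if_pos ha] at h
    refine ⟨ha, ?_, ?_⟩
    · intro hb; rw [if_pos hb] at h; split_ifs at h <;> omega
    · intro hb
      rcases Finset.mem_union.mp hb with hb | hb <;>
        [rw [if_pos hb] at h; rw [if_pos hb] at h] <;> split_ifs at h <;> omega
  have hGF : ∀ a ∈ φ.gfEvents, a ∈ ΓEL ∧ a ∉ ΓF ∧ a ∉ ΓG := by
    intro a ha
    have h := key a
    rw [if_pos ha] at h
    refine ⟨Finset.mem_union_left _ ha, ?_, ?_⟩ <;>
      · intro hb; rw [if_pos hb] at h; split_ifs at h <;> omega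
  have hFG : ∀ a ∈ φ.fgEvents, a ∈ ΓEL ∧ a ∉ ΓF ∧ a ∉ ΓG := by
    intro a ha
    have h := key a
    rw [if_pos ha] at h
    refine ⟨Finset.mem_union_right _ ha, ?_, ?_⟩ <;>
      · intro hb; rw [if_pos hb] at h; split_ifs at h <;> omega
  constructor
  · -- forward direction
    rintro ⟨σ, hσv, hσ⟩
    refine ⟨fun h p => (σ (h.map Prod.fst) p.1, upd γ ΓF ΓG p.1 p.2), ?_, ?_⟩
    · intro h p hp
      exact ⟨hσv _ _ hp, rfl⟩
    · intro π' hplay h0 hcomp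
      set π : ℕ → V := fun n => (π' n).1 with hπ
      have hmem : ∀ n, (π' n).2 = memSeq γ ΓF ΓG π n := by
        intro n
        induction n with
        | zero => rw [h0]; rfl
        | succ n ih =>
          have := (hplay n).2
          rw [this, ih]; rfl
      have hplayA : A.IsPlay π := fun n => (hplay n).1
      have hcompA : A.SysCompatible σ π := by
        intro n hs
        have h1 := hcomp n hs
        have h2 : π (n + 1) = (π' (n + 1)).1 := rfl
        rw [h2, h1]
        simp only [List.map_map]
        rfl
      have hsat := hσ π hplayA (by show (π' 0).1 = v; rw [h0]) hcompA
      have hlab : (fun n => (γ (π' n).1 ∩ ΓEL) ∪ (π' n).2) =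
          fun n => (γ (π n) ∩ ΓEL) ∪ memSeq γ ΓF ΓG π n := by
        funext n; rw [hmem n]
      rw [hlab]
      exact (sat_equiv γ ΓF ΓG ΓEL π φ hF hG hGF hFG).mpr hsat
  · -- backward direction
    rintro ⟨σ', hσ'v, hσ'⟩
    refine ⟨fun h w => (σ' (pairHist γ ΓF ΓG h ΓG) (w, memFold γ ΓF ΓG h ΓG)).1, ?_, ?_⟩
    · intro h w hw
      exact (hσ'v (pairHist γ ΓF ΓG h ΓG) (w, memFold γ ΓF ΓG h ΓG) hw).1
    · intro π hplay h0 hcomp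
      set π' : ℕ → V × Finset Γ := fun n => (π n, memSeq γ ΓF ΓG π n) with hπ'
      have hist_corr : ∀ n,
          pairHist γ ΓF ΓG ((List.range n).map π) ΓG = (List.range n).map π' ∧
          memFold γ ΓF ΓG ((List.range n).map π) ΓG = memSeq γ ΓF ΓG π n := by
        intro n
        induction n with
        | zero => exact ⟨rfl, rfl⟩
        | succ n ih =>
          simp only [List.range_succ, List.map_append, List.map_cons, List.map_nil]
          constructor
          · rw [pairHist_append, ih.1, ih.2]
          · rw [memFold_append, ih.2]
            rfl
      have hplay' : (A.withMemory γ ΓF ΓG).IsPlay π' := by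
        intro n
        exact ⟨hplay n, rfl⟩
      have h0' : π' 0 = (v, ΓG) := by
        show (π 0, memSeq γ ΓF ΓG π 0) = (v, ΓG)
        rw [h0]
        rfl
      have hcompat' : (A.withMemory γ ΓF ΓG).SysCompatible σ' π' := by
        intro n hs
        have hs' : A.sys (π n) := hs
        have h1 := hcomp n hs'
        have hfst : (π' (n + 1)).1 =
            (σ' ((List.range n).map π') (π' n)).1 := by
          show π (n + 1) = _
          simp only [h1]
          rw [(hist_corr n).1, (hist_corr n).2]
        have hedge := hσ'v ((List.range n).map π') (π' n) hs'
        have hsnd : (σ' ((List.range n).map π') (π' n)).2 =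
            upd γ ΓF ΓG (π n) (memSeq γ ΓF ΓG π n) := hedge.2
        have : (π' (n + 1)).2 = (σ' ((List.range n).map π') (π' n)).2 := by
          rw [hsnd]; rfl
        exact Prod.ext hfst this
      have hsat := hσ' π' hplay' h0' hcompat'
      exact (sat_equiv γ ΓF ΓG ΓEL π φ hF hG hGF hFG).mp hsat
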